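/- Let H be a complex Hilbert space and let T1, T2 be commuting bounded operators on H with ‖T1‖ < 1 and ‖T2‖ < 1. Let D_{T1} = (I − T1*T1)^{1/2} and D_{T2} = (I − T2*T2)^{1/2}. Then there exists a unitary operator S on H ⊕₂ H such that S(D_{T1} T2 h, D_{T2} h) = (D_{T1} h, D_{T2} T1 h) for all h ∈ H. -/

import Mathlib

open ContinuousLinearMap

section AndoAux

variable {H : Type*} [NormedAddCommGroup H] [InnerProductSpace ℂ H] [CompleteSpace H]

private lemma ando_norm_of_sq {a b : ℝ} (ha : 0 ≤ a) (hb : 0 ≤ b) (h : a ^ 2 = b ^ 2) :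
    a = b := by nlinarith

/-- A selfadjoint operator whose square is invertible is invertible, with selfadjoint
inverse. -/
private lemma ando_inv_of_sq (a : H →L[ℂ] H) (hsa : star a = a) (hu : IsUnit (a * a)) :
    ∃ b : H →L[ℂ] H, a * b = 1 ∧ b * a = 1 ∧ star b = b := by
  obtain ⟨u, hu⟩ := hu
  have hc : Commute a (a * a) := (Commute.refl a).mul_right (Commute.refl a)
  rw [← hu] at hc
  have hci : Commute a ↑u⁻¹ := hc.units_inv_right
  have hab : a * (↑u⁻¹ * a) = 1 := by
    rw [← mul_assoc, hci.eq, mul_assoc, ← hu, u.inv_mul]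
  have hba : (↑u⁻¹ * a) * a = 1 := by
    rw [mul_assoc, ← hu, u.inv_mul]
  refine ⟨↑u⁻¹ * a, hab, hba, ?_⟩
  have h1 : star (↑u⁻¹ * a : H →L[ℂ] H) * a = 1 := by
    have := congrArg star hab
    rwa [star_mul, hsa, star_one] at this
  calc star (↑u⁻¹ * a : H →L[ℂ] H)
      = star (↑u⁻¹ * a : H →L[ℂ] H) * (a * (↑u⁻¹ * a)) := by rw [hab, mul_one]
    _ = (star (↑u⁻¹ * a : H →L[ℂ] H) * a) * (↑u⁻¹ * a) := by rw [mul_assoc]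
    _ = ↑u⁻¹ * a := by rw [h1, one_mul]

/-- For a nonnegative invertible operator `a`, there is a selfadjoint `q` (namely `a^{-1/2}`)
with `q * a * q = 1`, together with a two-sided inverse `qi` of `q`. -/
private lemma ando_inv_sqrt (a : H →L[ℂ] H) (ha : 0 ≤ a) (hu : IsUnit a) :
    ∃ q qi : H →L[ℂ] H, IsSelfAdjoint q ∧ q * a * q = 1 ∧ q * qi = 1 ∧ qi * q = 1 := by
  have hsa : star a = a := (IsSelfAdjoint.of_nonneg ha).star_eq
  set u := hu.unit with hu_def
  have hus : (u : H →L[ℂ] H) = a := hu.unit_spec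
  set b : H →L[ℂ] H := ↑u⁻¹ with hb_def
  have hba : b * a = 1 := by rw [← hus]; exact u.inv_mul
  have hab : a * b = 1 := by rw [← hus]; exact u.mul_inv
  have hsb : star b = b := by
    have h1 : star b * a = 1 := by
      have := congrArg star hab
      rwa [star_mul, hsa, star_one] at this
    calc star b = star b * (a * b) := by rw [hab, mul_one]
      _ = (star b * a) * b := by rw [mul_assoc]
      _ = b := by rw [h1, one_mul]
  have hb0 : 0 ≤ b := by
    have h0 : 0 ≤ star b * a * b := star_left_conjugate_nonneg ha b
    rwa [hsb, mul_assoc, hab, mul_one] at h0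
  set q : H →L[ℂ] H := CFC.sqrt b with hq_def
  have hq0 : 0 ≤ q := CFC.sqrt_nonneg b
  have hqq : q * q = b := CFC.sqrt_mul_sqrt_self b hb0
  have hqsa : IsSelfAdjoint q := IsSelfAdjoint.of_nonneg hq0
  have hqb : Commute q b := by rw [← hqq]; exact (Commute.refl q).mul_left (Commute.refl q)
  have hqa : q * a = a * q := by
    calc q * a = (a * b) * (q * a) := by rw [hab, one_mul]
      _ = a * ((b * q) * a) := by simp only [mul_assoc]
      _ = a * ((q * b) * a) := by rw [← hqb.eq]
      _ = a * q * (b * a) := by simp only [mul_assoc]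
      _ = a * q := by rw [hba, mul_one]
  have key : q * a * q = 1 := by
    calc q * a * q = a * q * q := by rw [hqa]
      _ = a * (q * q) := by rw [mul_assoc]
      _ = a * b := by rw [hqq]
      _ = 1 := hab
  refine ⟨q, q * a, hqsa, key, ?_, ?_⟩
  · calc q * (q * a) = (q * q) * a := by rw [mul_assoc]
      _ = b * a := by rw [hqq]
      _ = 1 := hba
  · calc (q * a) * q = q * a * q := rfl
      _ = 1 := key

set_option maxHeartbeats 1000000 in
/-- The core construction: given operators `B C E` with `E = B * C`, `C` invertible,
and selfadjoint `Q`, `R` with `Q (C*C + E*E) Q = 1` and `R (1 + B B*) R = 1`, the map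
`(h, z) ↦ (C Q h - B* R z, E Q h + R z)` is a unitary on `H ⊕₂ H`. -/
private lemma ando_aux (B C E Q R Ci : H →L[ℂ] H)
    (hEBC : E = B * C)
    (hQsa : IsSelfAdjoint Q) (hRsa : IsSelfAdjoint R)
    (hQ : Q * (star C * C + star E * E) * Q = 1)
    (hR : R * (1 + B * star B) * R = 1)
    (hCi : C * Ci = 1) (hCi' : Ci * C = 1) :
    ∃ V : WithLp 2 (H × H) ≃ₗᵢ[ℂ] WithLp 2 (H × H),
      ∀ h z : H, V (WithLp.toLp 2 (h, z) : WithLp 2 (H × H)) =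
        (WithLp.toLp 2 (C (Q h) - star B (R z), E (Q h) + R z) : WithLp 2 (H × H)) := by
  set F : H →L[ℂ] H := star C * C + star E * E with hF_def
  set G : H →L[ℂ] H := 1 + B * star B with hG_def
  -- basic algebraic consequences
  have hQ' : Q * (F * Q) = 1 := by rw [← mul_assoc]; exact hQ
  have hQF : Q * F = F * Q := by
    calc Q * F = (Q * F) * (Q * (F * Q)) := by rw [hQ', mul_one]
      _ = ((Q * F) * Q) * (F * Q) := by simp only [mul_assoc]
      _ = F * Q := by rw [hQ, one_mul]
  have hQiQ : (F * Q) * Q = 1 := by rw [← hQF]; exact hQ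
  have hR' : R * (G * R) = 1 := by rw [← mul_assoc]; exact hR
  have hRG : R * G = G * R := by
    calc R * G = (R * G) * (R * (G * R)) := by rw [hR', mul_one]
      _ = ((R * G) * R) * (G * R) := by simp only [mul_assoc]
      _ = G * R := by rw [hR, one_mul]
  have hRiR : (G * R) * R = 1 := by rw [← hRG]; exact hR
  have hGinv1 : G * (R * R) = 1 := by rw [← mul_assoc]; exact hRiR
  have hGinv2 : (R * R) * G = 1 := by
    rw [mul_assoc, hRG]; exact hR'
  -- pointwise versions of the operator identities
  have apQ : ∀ x : H, Q ((F * Q) x) = x := fun x => by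
    have := DFunLike.congr_fun hQ' x
    simpa [mul_apply] using this
  have apQi : ∀ x : H, (F * Q) (Q x) = x := fun x => by
    have := DFunLike.congr_fun hQiQ x
    simpa [mul_apply] using this
  have apR : ∀ x : H, R ((G * R) x) = x := fun x => by
    have := DFunLike.congr_fun hR' x
    simpa [mul_apply] using this
  have apRi : ∀ x : H, (G * R) (R x) = x := fun x => by
    have := DFunLike.congr_fun hRiR x
    simpa [mul_apply] using this
  have apG1 : ∀ x : H, G ((R * R) x) = x := fun x => by
    have := DFunLike.congr_fun hGinv1 x
    simpa [mul_apply] using this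
  have apG2 : ∀ x : H, (R * R) (G x) = x := fun x => by
    have := DFunLike.congr_fun hGinv2 x
    simpa [mul_apply] using this
  have apCi : ∀ x : H, Ci (C x) = x := fun x => by
    have := DFunLike.congr_fun hCi' x
    simpa [mul_apply] using this
  have apC : ∀ x : H, C (Ci x) = x := fun x => by
    have := DFunLike.congr_fun hCi x
    simpa [mul_apply] using this
  have apE : ∀ x : H, B (C x) = E x := fun x => by
    have := DFunLike.congr_fun hEBC x
    simpa [mul_apply] using this.symm
  -- the forward continuous linear map
  set fstH : H × H →L[ℂ] H := ContinuousLinearMap.fst ℂ H H with hfst_def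
  set sndH : H × H →L[ℂ] H := ContinuousLinearMap.snd ℂ H H with hsnd_def
  set φ : H × H →L[ℂ] H × H :=
    ((C * Q).comp fstH - (star B * R).comp sndH).prod
      ((E * Q).comp fstH + R.comp sndH) with hφ_def
  have φ_apply : ∀ a b : H, φ ((a, b) : H × H) = (C (Q a) - star B (R b), E (Q a) + R b) :=
    fun a b => rfl
  -- the inverse continuous linear map
  set z0 : H × H →L[ℂ] H := (R * R).comp (sndH - B.comp fstH) with hz0_def
  have z0_apply : ∀ a b : H, z0 ((a, b) : H × H) = (R * R) (b - B a) := fun a b => rfl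
  set ψ : H × H →L[ℂ] H × H :=
    (((F * Q) * Ci).comp (fstH + (star B).comp z0)).prod ((G * R).comp z0) with hψ_def
  have ψ_apply : ∀ a b : H, ψ ((a, b) : H × H) =
      ((F * Q) (Ci (a + star B (z0 ((a, b) : H × H)))), (G * R) (z0 ((a, b) : H × H))) :=
    fun a b => rfl
  -- G applied
  have apGdef : ∀ x : H, G x = x + B (star B x) := fun x => by
    simp [hG_def, add_apply, one_apply, mul_apply]
  -- ψ ∘ φ = id
  have left_inv : ∀ p : H × H, ψ (φ p) = p := by
    intro p
    obtain ⟨h, z⟩ := p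
    rw [φ_apply]
    have s1 : z0 ((C (Q h) - star B (R z), E (Q h) + R z) : H × H) = R z := by
      rw [z0_apply]
      have e1 : (E (Q h) + R z) - B (C (Q h) - star B (R z)) = G (R z) := by
        rw [map_sub, apE, apGdef]
        abel
      rw [e1, apG2]
    rw [ψ_apply, s1]
    have s3 : (C (Q h) - star B (R z)) + star B (R z) = C (Q h) := by abel
    rw [s3, apCi, apQi, apRi]
  -- φ ∘ ψ = id
  have right_inv : ∀ p : H × H, φ (ψ p) = p := by
    intro p
    obtain ⟨x1, x2⟩ := p
    rw [ψ_apply, φ_apply]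
    have hz0v : z0 ((x1, x2) : H × H) = (R * R) (x2 - B x1) := z0_apply x1 x2
    rw [hz0v]
    set w : H := (R * R) (x2 - B x1) with hw_def
    have m1 : Q ((F * Q) (Ci (x1 + star B w))) = Ci (x1 + star B w) := apQ _
    have m2 : R ((G * R) w) = w := apR _
    rw [m1, m2, apC]
    simp only [Prod.mk.injEq]
    refine ⟨?_, ?_⟩
    · abel
    · have e2 : E (Ci (x1 + star B w)) = B (x1 + star B w) := by
        rw [hEBC, ContinuousLinearMap.mul_apply, apC]
      rw [e2, map_add]
      have e3 : G w = x2 - B x1 := apG1 _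
      rw [apGdef] at e3
      have e4 : B (star B w) = x2 - B x1 - w := by
        have := e3
        rw [← this]
        abel
      rw [e4]
      abel
  -- assemble the continuous linear equivalence
  set Φ : (H × H) ≃L[ℂ] (H × H) := ContinuousLinearEquiv.equivOfInverse φ ψ left_inv right_inv
    with hΦ_def
  have Φ_apply : ∀ p : H × H, Φ p = (C (Q p.1) - star B (R p.2), E (Q p.1) + R p.2) :=
    fun p => rfl
  set Vlin : WithLp 2 (H × H) ≃ₗ[ℂ] WithLp 2 (H × H) :=
    (WithLp.linearEquiv 2 ℂ (H × H)).trans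
      (Φ.toLinearEquiv.trans (WithLp.linearEquiv 2 ℂ (H × H)).symm) with hVlin_def
  have Vlin_apply : ∀ x : WithLp 2 (H × H),
      Vlin x = (WithLp.toLp 2 (C (Q x.fst) - star B (R x.snd), E (Q x.fst) + R x.snd) : WithLp 2 (H × H)) :=
    fun x => rfl
  -- norm computations
  have normsq1 : ∀ x : H, ‖C x‖ ^ 2 + ‖E x‖ ^ 2 = RCLike.re (inner (𝕜 := ℂ) (F x) x) := by
    intro x
    have e1 : inner (𝕜 := ℂ) (F x) x
        = inner (𝕜 := ℂ) ((star C * C) x) x + inner (𝕜 := ℂ) ((star E * E) x) x := by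
      rw [hF_def, add_apply, inner_add_left]
    have e2 : inner (𝕜 := ℂ) ((star C * C) x) x = inner (𝕜 := ℂ) (C x) (C x) := by
      rw [ContinuousLinearMap.mul_apply, star_eq_adjoint, adjoint_inner_left]
    have e3 : inner (𝕜 := ℂ) ((star E * E) x) x = inner (𝕜 := ℂ) (E x) (E x) := by
      rw [ContinuousLinearMap.mul_apply, star_eq_adjoint, adjoint_inner_left]
    rw [e1, e2, e3, map_add, inner_self_eq_norm_sq, inner_self_eq_norm_sq]
  have normsq2 : ∀ x : H, ‖star B x‖ ^ 2 + ‖x‖ ^ 2 = RCLike.re (inner (𝕜 := ℂ) (G x) x) := by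
    intro x
    have e1 : inner (𝕜 := ℂ) (G x) x
        = inner (𝕜 := ℂ) x x + inner (𝕜 := ℂ) ((B * star B) x) x := by
      rw [hG_def, add_apply, inner_add_left, ContinuousLinearMap.one_apply]
    have e2 : inner (𝕜 := ℂ) ((B * star B) x) x = inner (𝕜 := ℂ) (star B x) (star B x) := by
      have : (B * star B) x = ContinuousLinearMap.adjoint (ContinuousLinearMap.adjoint B)
          (ContinuousLinearMap.adjoint B x) := by
        rw [adjoint_adjoint, ContinuousLinearMap.mul_apply, star_eq_adjoint]
      rw [this, adjoint_inner_left, ← star_eq_adjoint]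
    rw [e1, e2, map_add, inner_self_eq_norm_sq, inner_self_eq_norm_sq]
    ring
  have moveQ : ∀ u v : H, inner (𝕜 := ℂ) u (Q v) = inner (𝕜 := ℂ) (Q u) v := by
    intro u v
    conv_rhs => rw [← hQsa.star_eq, star_eq_adjoint]
    rw [adjoint_inner_left]
  have moveR : ∀ u v : H, inner (𝕜 := ℂ) u (R v) = inner (𝕜 := ℂ) (R u) v := by
    intro u v
    conv_rhs => rw [← hRsa.star_eq, star_eq_adjoint]
    rw [adjoint_inner_left]
  have key1 : ∀ h : H, ‖C (Q h)‖ ^ 2 + ‖E (Q h)‖ ^ 2 = ‖h‖ ^ 2 := by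
    intro h
    rw [normsq1]
    have : inner (𝕜 := ℂ) (F (Q h)) (Q h) = inner (𝕜 := ℂ) ((Q * F * Q) h) h := by
      rw [moveQ]; rfl
    rw [this, hQ, ContinuousLinearMap.one_apply, inner_self_eq_norm_sq]
  have key2 : ∀ z : H, ‖star B (R z)‖ ^ 2 + ‖R z‖ ^ 2 = ‖z‖ ^ 2 := by
    intro z
    rw [normsq2]
    have : inner (𝕜 := ℂ) (G (R z)) (R z) = inner (𝕜 := ℂ) ((R * G * R) z) z := by
      rw [moveR]; rfl
    rw [this, hR, ContinuousLinearMap.one_apply, inner_self_eq_norm_sq]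
  have keycross : ∀ h z : H,
      inner (𝕜 := ℂ) (C (Q h)) (star B (R z)) = inner (𝕜 := ℂ) (E (Q h)) (R z) := by
    intro h z
    rw [star_eq_adjoint, adjoint_inner_right, apE]
  have norm_map : ∀ x : WithLp 2 (H × H), ‖Vlin x‖ = ‖x‖ := by
    intro x
    refine ando_norm_of_sq (norm_nonneg _) (norm_nonneg _) ?_
    rw [WithLp.prod_norm_sq_eq_of_L2, WithLp.prod_norm_sq_eq_of_L2]
    have hfst : (Vlin x).fst = C (Q x.fst) - star B (R x.snd) := by rw [Vlin_apply]; rfl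
    have hsnd : (Vlin x).snd = E (Q x.fst) + R x.snd := by rw [Vlin_apply]; rfl
    rw [hfst, hsnd, norm_sub_sq (𝕜 := ℂ), norm_add_sq (𝕜 := ℂ), keycross]
    have k1 := key1 x.fst
    have k2 := key2 x.snd
    nlinarith [k1, k2]
  refine ⟨⟨Vlin, norm_map⟩, ?_⟩
  intro h z
  exact Vlin_apply (WithLp.toLp 2 (h, z) : WithLp 2 (H × H))

/-- The coordinate swap as a unitary on `H ⊕₂ H`. -/
private noncomputable def ando_swap : WithLp 2 (H × H) ≃ₗᵢ[ℂ] WithLp 2 (H × H) where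
  toLinearEquiv := (WithLp.linearEquiv 2 ℂ (H × H)).trans
    ((LinearEquiv.prodComm ℂ H H).trans (WithLp.linearEquiv 2 ℂ (H × H)).symm)
  norm_map' := fun x => ando_norm_of_sq (norm_nonneg _) (norm_nonneg _) (by
    rw [WithLp.prod_norm_sq_eq_of_L2, WithLp.prod_norm_sq_eq_of_L2]
    exact add_comm _ _)

private lemma ando_swap_apply (a b : H) :
    ando_swap (WithLp.toLp 2 (a, b) : WithLp 2 (H × H)) = (WithLp.toLp 2 (b, a) : WithLp 2 (H × H)) := rfl

end AndoAux

/-- For a commuting pair of strict contractions `(T1, T2)` on a complex Hilbert space,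
with defect operators `D1, D2` (the positive square roots of `I - Ti*Ti`), there is a
unitary `S` on `H ⊕₂ H` such that `S (D1 T2 h, D2 h) = (D1 h, D2 T1 h)` for all `h`. -/
theorem exists_unitary_intertwining_defects
    (H : Type*) [NormedAddCommGroup H] [InnerProductSpace ℂ H] [CompleteSpace H]
    (T1 T2 : H →L[ℂ] H) (hcomm : T1 ∘L T2 = T2 ∘L T1)
    (hT1 : ‖T1‖ < 1) (hT2 : ‖T2‖ < 1)
    (D1 D2 : H →L[ℂ] H)
    (hD1pos : D1.IsPositive) (hD2pos : D2.IsPositive)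
    (hD1 : D1 ∘L D1 = 1 - (ContinuousLinearMap.adjoint T1) ∘L T1)
    (hD2 : D2 ∘L D2 = 1 - (ContinuousLinearMap.adjoint T2) ∘L T2) :
    ∃ S : WithLp 2 (H × H) ≃ₗᵢ[ℂ] WithLp 2 (H × H),
      ∀ h : H,
        S (WithLp.toLp 2 (D1 (T2 h), D2 h) : WithLp 2 (H × H))
          = (WithLp.toLp 2 (D1 h, D2 (T1 h)) : WithLp 2 (H × H)) := by
  have hc : T1 * T2 = T2 * T1 := hcomm
  have hD1m : D1 * D1 = 1 - star T1 * T1 := by rw [star_eq_adjoint]; exact hD1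
  have hD2m : D2 * D2 = 1 - star T2 * T2 := by rw [star_eq_adjoint]; exact hD2
  have hsaD1 : star D1 = D1 := hD1pos.isSelfAdjoint.star_eq
  have hsaD2 : star D2 = D2 := hD2pos.isSelfAdjoint.star_eq
  have hu1 : IsUnit (D1 * D1) := by
    rw [hD1m]
    refine isUnit_one_sub_of_norm_lt_one ?_
    calc ‖star T1 * T1‖ ≤ ‖star T1‖ * ‖T1‖ := norm_mul_le _ _
      _ = ‖T1‖ * ‖T1‖ := by rw [norm_star]
      _ < 1 := by nlinarith [norm_nonneg T1]
  have hu2 : IsUnit (D2 * D2) := by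
    rw [hD2m]
    refine isUnit_one_sub_of_norm_lt_one ?_
    calc ‖star T2 * T2‖ ≤ ‖star T2‖ * ‖T2‖ := norm_mul_le _ _
      _ = ‖T2‖ * ‖T2‖ := by rw [norm_star]
      _ < 1 := by nlinarith [norm_nonneg T2]
  obtain ⟨J1, hD1J1, hJ1D1, hJ1sa⟩ := ando_inv_of_sq D1 hsaD1 hu1
  obtain ⟨J2, hD2J2, hJ2D2, hJ2sa⟩ := ando_inv_of_sq D2 hsaD2 hu2
  set A : H →L[ℂ] H := D1 * T2 * J2 with hA_def
  set Bb : H →L[ℂ] H := D2 * T1 * J1 with hBb_def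
  set Cc : H →L[ℂ] H := D1 * J2 with hCc_def
  set Ee : H →L[ℂ] H := D2 * T1 * J2 with hEe_def
  set F : H →L[ℂ] H := star Cc * Cc + star Ee * Ee with hF_def
  -- the central identity coming from commutativity
  have hMid : D2 * D2 + star T2 * (D1 * D1) * T2 = D1 * D1 + star T1 * (D2 * D2) * T1 := by
    rw [hD1m, hD2m]
    have expand : ∀ S T : H →L[ℂ] H,
        (1 - star S * S) + star S * (1 - star T * T) * S
          = 1 - star S * (star T * (T * S)) := by
      intro S T; noncomm_ring
    rw [expand T2 T1, expand T1 T2]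
    have hx : star T2 * (star T1 * (T1 * T2)) = star T1 * (star T2 * (T2 * T1)) := by
      calc star T2 * (star T1 * (T1 * T2)) = star (T1 * T2) * (T1 * T2) := by
            rw [← mul_assoc, ← star_mul]
        _ = star (T2 * T1) * (T2 * T1) := by rw [hc]
        _ = star T1 * (star T2 * (T2 * T1)) := by rw [star_mul, mul_assoc]
    rw [hx]
  have hKey : (1 : H →L[ℂ] H) + star A * A = F := by
    have e1 : (1 : H →L[ℂ] H) = J2 * (D2 * D2) * J2 := by
      calc (1 : H →L[ℂ] H) = (J2 * D2) * (D2 * J2) := by rw [hJ2D2, hD2J2, one_mul]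
        _ = J2 * (D2 * D2) * J2 := by noncomm_ring
    have e2 : star A * A = J2 * (star T2 * (D1 * D1) * T2) * J2 := by
      rw [hA_def]
      simp only [star_mul, hJ2sa, hsaD1]
      noncomm_ring
    have e3 : star Cc * Cc = J2 * (D1 * D1) * J2 := by
      rw [hCc_def]
      simp only [star_mul, hJ2sa, hsaD1]
      noncomm_ring
    have e4 : star Ee * Ee = J2 * (star T1 * (D2 * D2) * T1) * J2 := by
      rw [hEe_def]
      simp only [star_mul, hJ2sa, hsaD2]
      noncomm_ring
    rw [hF_def, e2, e3, e4]
    conv_lhs => rw [e1]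
    calc J2 * (D2 * D2) * J2 + J2 * (star T2 * (D1 * D1) * T2) * J2
        = J2 * (D2 * D2 + star T2 * (D1 * D1) * T2) * J2 := by noncomm_ring
      _ = J2 * (D1 * D1 + star T1 * (D2 * D2) * T1) * J2 := by rw [hMid]
      _ = J2 * (D1 * D1) * J2 + J2 * (star T1 * (D2 * D2) * T1) * J2 := by noncomm_ring
  -- positivity and invertibility
  have hF0 : 0 ≤ F := add_nonneg (star_mul_self_nonneg _) (star_mul_self_nonneg _)
  have hFu : IsUnit F := by
    rw [← hKey]
    exact CStarAlgebra.isUnit_of_le 1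
      (le_add_of_nonneg_right (star_mul_self_nonneg A))
  have hGA0 : 0 ≤ 1 + A * star A := add_nonneg zero_le_one (mul_star_self_nonneg A)
  have hGAu : IsUnit (1 + A * star A) :=
    CStarAlgebra.isUnit_of_le 1
      (le_add_of_nonneg_right (mul_star_self_nonneg A))
  have hGB0 : 0 ≤ 1 + Bb * star Bb := add_nonneg zero_le_one (mul_star_self_nonneg Bb)
  have hGBu : IsUnit (1 + Bb * star Bb) :=
    CStarAlgebra.isUnit_of_le 1
      (le_add_of_nonneg_right (mul_star_self_nonneg Bb))
  obtain ⟨Q, Qi, hQsa, hQFQ, hQQi, hQiQ⟩ := ando_inv_sqrt F hF0 hFu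
  obtain ⟨R1, R1i, hR1sa, hR1G, -, -⟩ := ando_inv_sqrt (1 + A * star A) hGA0 hGAu
  obtain ⟨R2, R2i, hR2sa, hR2G, -, -⟩ := ando_inv_sqrt (1 + Bb * star Bb) hGB0 hGBu
  -- the two graph unitaries
  obtain ⟨V₁, hV₁⟩ := ando_aux A 1 A Q R1 1 (mul_one A).symm hQsa hR1sa
    (by rw [star_one, one_mul, hKey]; exact hQFQ) hR1G (one_mul 1) (one_mul 1)
  have hEBC2 : Ee = Bb * Cc := by
    rw [hEe_def, hBb_def, hCc_def]
    have : (D2 * T1 * J1) * (D1 * J2) = D2 * T1 * ((J1 * D1) * J2) := by noncomm_ring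
    rw [this, hJ1D1, one_mul]
  have hCi : Cc * (D2 * J1) = 1 := by
    rw [hCc_def]
    have : (D1 * J2) * (D2 * J1) = D1 * ((J2 * D2) * J1) := by noncomm_ring
    rw [this, hJ2D2, one_mul, hD1J1]
  have hCi' : (D2 * J1) * Cc = 1 := by
    rw [hCc_def]
    have : (D2 * J1) * (D1 * J2) = D2 * ((J1 * D1) * J2) := by noncomm_ring
    rw [this, hJ1D1, one_mul, hD2J2]
  obtain ⟨V₂, hV₂⟩ := ando_aux Bb Cc Ee Q R2 (D2 * J1) hEBC2 hQsa hR2sa hQFQ hR2G hCi hCi'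
  -- pointwise identities
  have pA : ∀ h : H, A (D2 h) = D1 (T2 h) := by
    intro h
    have hop : A * D2 = D1 * T2 := by
      rw [hA_def]
      have : (D1 * T2 * J2) * D2 = D1 * T2 * (J2 * D2) := by noncomm_ring
      rw [this, hJ2D2, mul_one]
    calc A (D2 h) = (A * D2) h := rfl
      _ = (D1 * T2) h := by rw [hop]
      _ = D1 (T2 h) := rfl
  have pC : ∀ h : H, Cc (D2 h) = D1 h := by
    intro h
    have hop : Cc * D2 = D1 := by
      rw [hCc_def]
      have : (D1 * J2) * D2 = D1 * (J2 * D2) := by noncomm_ring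
      rw [this, hJ2D2, mul_one]
    calc Cc (D2 h) = (Cc * D2) h := rfl
      _ = D1 h := by rw [hop]
  have pE : ∀ h : H, Ee (D2 h) = D2 (T1 h) := by
    intro h
    have hop : Ee * D2 = D2 * T1 := by
      rw [hEe_def]
      have : (D2 * T1 * J2) * D2 = D2 * T1 * (J2 * D2) := by noncomm_ring
      rw [this, hJ2D2, mul_one]
    calc Ee (D2 h) = (Ee * D2) h := rfl
      _ = (D2 * T1) h := by rw [hop]
      _ = D2 (T1 h) := rfl
  have pQ : ∀ x : H, Q (Qi x) = x := by
    intro x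
    have := DFunLike.congr_fun hQQi x
    simpa [mul_apply] using this
  -- assemble the unitary
  refine ⟨ando_swap.trans (V₁.symm.trans V₂), fun h => ?_⟩
  have e1 : V₁ (WithLp.toLp 2 (Qi (D2 h), 0) : WithLp 2 (H × H))
      = (WithLp.toLp 2 (D2 h, D1 (T2 h)) : WithLp 2 (H × H)) := by
    rw [hV₁]
    have c1 : (1 : H →L[ℂ] H) (Q (Qi (D2 h))) - star A (R1 0) = D2 h := by
      rw [map_zero, map_zero, sub_zero, ContinuousLinearMap.one_apply, pQ]
    have c2 : A (Q (Qi (D2 h))) + R1 0 = D1 (T2 h) := by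
      rw [map_zero, add_zero, pQ, pA]
    rw [c1, c2]
  have e2 : V₁.symm (WithLp.toLp 2 (D2 h, D1 (T2 h)) : WithLp 2 (H × H))
      = (WithLp.toLp 2 (Qi (D2 h), 0) : WithLp 2 (H × H)) := by
    rw [← e1, LinearIsometryEquiv.symm_apply_apply]
  have e3 : V₂ (WithLp.toLp 2 (Qi (D2 h), 0) : WithLp 2 (H × H))
      = (WithLp.toLp 2 (D1 h, D2 (T1 h)) : WithLp 2 (H × H)) := by
    rw [hV₂]
    have c1 : Cc (Q (Qi (D2 h))) - star Bb (R2 0) = D1 h := by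
      rw [map_zero, map_zero, sub_zero, pQ, pC]
    have c2 : Ee (Q (Qi (D2 h))) + R2 0 = D2 (T1 h) := by
      rw [map_zero, add_zero, pQ, pE]
    rw [c1, c2]
  calc (ando_swap.trans (V₁.symm.trans V₂)) (WithLp.toLp 2 (D1 (T2 h), D2 h) : WithLp 2 (H × H))
      = V₂ (V₁.symm (ando_swap (WithLp.toLp 2 (D1 (T2 h), D2 h) : WithLp 2 (H × H)))) := rfl
    _ = V₂ (V₁.symm (WithLp.toLp 2 (D2 h, D1 (T2 h)) : WithLp 2 (H × H))) := by rw [ando_swap_apply]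
    _ = V₂ (WithLp.toLp 2 (Qi (D2 h), 0) : WithLp 2 (H × H)) := by rw [e2]
    _ = (WithLp.toLp 2 (D1 h, D2 (T1 h)) : WithLp 2 (H × H)) := e3
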